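/- P' = { (uv)^k u : u ∈ Σ*, v ∈ Σ⁺, k ≥ 1 and uv ∈ L }, i.e., a word belongs to P' if and only if it can be written as (uv)^k u for some (possibly empty) word u, nonempty word v, and integer k ≥ 1 with uv a Lyndon word. -/

import Mathlib

variable {α : Type*}

/-- The rotation `rot(w,i) = w[i..|w|-1] w[0..i-1]`. -/
def rot (w : List α) (i : ℕ) : List α := w.drop i ++ w.take i

/-- A Lyndon word: a nonempty word strictly smaller than all of its proper rotations. -/
def IsLyndon [LinearOrder α] (w : List α) : Prop :=
  w ≠ [] ∧ ∀ i, 0 < i → i < w.length → w < rot w i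

/-- `IsCFL w f` : `f` is the Chen–Fox–Lyndon factorization of `w`, i.e. a
nonincreasing sequence of Lyndon words whose concatenation is `w`. -/
def IsCFL [LinearOrder α] (w : List α) (f : List (List α)) : Prop :=
  f.flatten = w ∧ (∀ x ∈ f, IsLyndon x) ∧ f.Chain' (· ≥ ·)

/-- `u^k` : the `k`-fold concatenation of the word `u`. -/
def listPow (u : List α) (k : ℕ) : List α := (List.replicate k u).flatten

/-- `P`: the set of nonempty prefixes of Lyndon words. -/
def InP [LinearOrder α] (w : List α) : Prop :=
  w ≠ [] ∧ ∃ u : List α, IsLyndon (w ++ u)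

/-- `P' = P ∪ { c^k : k ≥ 2 }` where `c` is the maximum symbol of the alphabet. -/
def InP' [LinearOrder α] (w : List α) : Prop :=
  InP w ∨ ∃ (c : α) (k : ℕ), 2 ≤ k ∧ (∀ a : α, a ≤ c) ∧ w = List.replicate k c

/-- A border of `w`: a proper prefix of `w` that is also a suffix of `w`. -/
def IsBorder (b w : List α) : Prop := b <+: w ∧ b <:+ w ∧ b.length < w.length

/-- The length of the longest common prefix of two words. -/
def lcpLen [DecidableEq α] : List α → List α → ℕ
  | a :: u, b :: v => if a = b then lcpLen u v + 1 else 0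
  | _, _ => 0

section P'Helpers
set_option linter.unusedSectionVars false
variable [LinearOrder α]

theorem pf_diff_lt {a b : α} (h : a < b) (p s t : List α) :
    p ++ a :: s < p ++ b :: t :=
  List.Lex.append_left _ (List.Lex.rel h) p

theorem pf_asymm {u v : List α} (h : u < v) (h' : v < u) : False :=
  List.lt_asymm h h'

theorem pf_irrefl {u : List α} (h : u < u) : False := pf_asymm h h

theorem pf_lt_decomp {u v : List α} (h : u < v) :
    (u <+: v ∧ u ≠ v) ∨
      ∃ (p s t : List α) (a b : α), a < b ∧ u = p ++ a :: s ∧ v = p ++ b :: t := by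
  have h' : List.Lex (· < ·) u v := h
  clear h
  induction h' with
  | nil => exact Or.inl ⟨List.nil_prefix, by simp⟩
  | @cons a l₁ l₂ h ih =>
    rcases ih with ⟨hp, hne⟩ | ⟨p, s, t, x, y, hxy, rfl, rfl⟩
    · exact Or.inl ⟨List.cons_prefix_cons.mpr ⟨rfl, hp⟩, by simpa using hne⟩
    · exact Or.inr ⟨a :: p, s, t, x, y, hxy, rfl, rfl⟩
  | @rel a l₁ b l₂ h => exact Or.inr ⟨[], l₁, l₂, a, b, h, rfl, rfl⟩

theorem pf_lt_of_append_left {x u v : List α} (h : x ++ u < x ++ v) : u < v := by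
  induction x with
  | nil => exact h
  | cons c x ih =>
    have h' : List.Lex (· < ·) (c :: (x ++ u)) (c :: (x ++ v)) := h
    exact ih (List.lex_cons_iff.mp h')

theorem pf_lt_append_right {r : List α} (hr : r ≠ []) (u : List α) : u < u ++ r := by
  induction u with
  | nil =>
    obtain ⟨c, r', rfl⟩ := List.exists_cons_of_ne_nil hr
    exact List.Lex.nil
  | cons c u ih => exact List.Lex.cons ih

theorem pf_listPow_succ (u : List α) (k : ℕ) : listPow u (k + 1) = u ++ listPow u k := by
  simp [listPow, List.replicate_succ]

theorem pf_listPow_succ' (u : List α) (k : ℕ) : listPow u (k + 1) = listPow u k ++ u := by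
  simp [listPow, List.replicate_succ']

theorem pf_listPow_length (u : List α) (k : ℕ) : (listPow u k).length = k * u.length := by
  simp [listPow, Nat.mul_comm]

theorem pf_listPow_add (u : List α) (m n : ℕ) :
    listPow u (m + n) = listPow u m ++ listPow u n := by
  induction n with
  | zero => simp [listPow]
  | succ n ih => rw [← Nat.add_assoc, pf_listPow_succ', ih, pf_listPow_succ', List.append_assoc]

theorem pf_listPow_one (u : List α) : listPow u 1 = u := by simp [listPow]

theorem pf_listPow_singleton (c : α) (k : ℕ) : listPow [c] k = List.replicate k c := by
  induction k with
  | zero => simp [listPow]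
  | succ n ih => rw [pf_listPow_succ, ih, List.replicate_succ]; rfl

end P'Helpers
section P'Helpers2
set_option linter.unusedSectionVars false
variable [LinearOrder α]

theorem pf_unbordered {t s : List α} (hL : IsLyndon t) (hpre : s <+: t) (hsuf : s <:+ t)
    (hne : s ≠ []) (hlt : s.length < t.length) : False := by
  obtain ⟨y, hy⟩ := hpre
  obtain ⟨x, hx⟩ := hsuf
  have hsl : 0 < s.length := List.length_pos_iff.mpr hne
  have hxl : 0 < x.length := by
    have := congrArg List.length hx
    simp at this; omega
  have hxt : x.length < t.length := by
    have := congrArg List.length hx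
    simp at this; omega
  -- rotation at |s| :  t < y ++ s
  have h1 : t < y ++ s := by
    have h := hL.2 s.length hsl hlt
    rwa [rot, show t.drop s.length = y by rw [← hy]; exact List.drop_left,
      show t.take s.length = s by rw [← hy]; exact List.take_left] at h
  -- rotation at |x| :  t < s ++ x
  have h2 : t < s ++ x := by
    have h := hL.2 x.length hxl hxt
    rwa [rot, show t.drop x.length = s by rw [← hx]; exact List.drop_left,
      show t.take x.length = x by rw [← hx]; exact List.take_left] at h
  have hyx : y < x := pf_lt_of_append_left (x := s) (by rw [← hy] at h2; exact h2)
  have hxy : x ++ s < y ++ s := by rw [← hx] at h1; exact h1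
  have hlen : y.length = x.length := by
    have h1 := congrArg List.length hx
    have h2 := congrArg List.length hy
    simp at h1 h2; omega
  rcases pf_lt_decomp hyx with ⟨hp, hne'⟩ | ⟨p, s', t', c, d, hcd, rfl, rfl⟩
  · exact hne' (hp.eq_of_length hlen)
  · refine pf_asymm ?_ hxy
    rw [List.append_assoc, List.append_assoc, List.cons_append, List.cons_append]
    exact pf_diff_lt hcd _ _ _

/-- Duval key lemma: a Lyndon word differs from each of its proper suffixes
at a position inside the suffix (and is smaller there). -/
theorem pf_lyndon_diff_drop {t : List α} (hL : IsLyndon t) {j : ℕ} (h0 : 0 < j)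
    (hj : j < t.length) :
    ∃ (p s' t' : List α) (a b : α), a < b ∧ t = p ++ a :: s' ∧ t.drop j = p ++ b :: t' := by
  have hrot := hL.2 j h0 hj
  rw [rot] at hrot
  rcases pf_lt_decomp hrot with ⟨hp, hne⟩ | ⟨p, s', t', a, b, hab, h1, h2⟩
  · exact absurd (hp.eq_of_length (by simp; omega)) hne
  · by_cases hc : p.length < t.length - j
    · have hpre : p ++ [b] <+: t.drop j := by
        have h3 : p ++ [b] <+: t.drop j ++ t.take j := by
          rw [h2]
          exact ⟨t', by simp⟩
        exact List.prefix_of_prefix_length_le h3 (List.prefix_append _ _) (by simp; omega)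
      obtain ⟨z, hz⟩ := hpre
      exact ⟨p, s', z, a, b, hab, h1, by rw [← hz, List.append_assoc]; rfl⟩
    · -- border: t.drop j is a prefix of t
      have hdp : t.drop j <+: p := by
        have hpp : p <+: t.drop j ++ t.take j := ⟨b :: t', h2.symm⟩
        exact List.prefix_of_prefix_length_le (List.prefix_append _ _) hpp (by simp; omega)
      have hdt : t.drop j <+: t := hdp.trans ⟨a :: s', h1.symm⟩
      exact absurd (pf_unbordered hL hdt (List.drop_suffix j t)
        (by intro h; have := congrArg List.length h; simp at this; omega)
        (by simp; omega)) (fun f => f)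

end P'Helpers2
section P'Helpers3
set_option linter.unusedSectionVars false
variable [LinearOrder α]

theorem pf_shape_trans {L t p s' W : List α} {x : α} (hW : L = t ++ W) (hpt : t = p ++ x :: s') :
    ∃ z, L = p ++ x :: z :=
  ⟨s' ++ W, by rw [hW, hpt, List.append_assoc, List.cons_append]⟩

theorem pf_lt_of_shape {u v q : List α} {c d : α} (hcd : c < d)
    (hu : ∃ z, u = q ++ c :: z) (hv : ∃ z, v = q ++ d :: z) : u < v := by
  obtain ⟨z1, rfl⟩ := hu; obtain ⟨z2, rfl⟩ := hv; exact pf_diff_lt hcd _ _ _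

theorem pf_duval_ext {u v' : List α} {b a : α} (hL : IsLyndon (u ++ b :: v')) (hba : b < a)
    {k : ℕ} (hk : 1 ≤ k) : IsLyndon (listPow (u ++ b :: v') k ++ u ++ [a]) := by
  obtain ⟨k, rfl⟩ : ∃ k', k = k' + 1 := ⟨k - 1, by omega⟩
  set t := u ++ b :: v' with ht
  set L := listPow t (k + 1) ++ u ++ [a] with hLdef
  have hn : t.length = u.length + 1 + v'.length := by simp [ht]; omega
  have hnpos : 0 < t.length := by omega
  have hW : L = t ++ (listPow t k ++ (u ++ [a])) := by
    rw [hLdef, pf_listPow_succ, List.append_assoc, List.append_assoc]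
  have hLlen : L.length = (k + 1) * t.length + u.length + 1 := by
    simp [hLdef, pf_listPow_length, Nat.add_assoc]
  refine ⟨by simp [hLdef], ?_⟩
  intro i hi0 hiL
  rw [rot]
  rw [hLlen] at hiL
  by_cases hcase : (k + 1) * t.length ≤ i
  · -- rotation point inside the final `u ++ [a]`
    obtain ⟨j, hij⟩ : ∃ j, i = (k + 1) * t.length + j :=
      ⟨i - (k + 1) * t.length, by omega⟩
    have hju : j ≤ u.length := by omega
    have hdropL : L.drop i = u.drop j ++ [a] := by
      have h1 : L = listPow t (k + 1) ++ (u ++ [a]) := by rw [hLdef, List.append_assoc]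
      have h2 : i = (listPow t (k + 1)).length + j := by rw [pf_listPow_length]; omega
      rw [h1, h2, List.drop_length_add_append, List.drop_append_of_le_length hju]
    by_cases hj0 : j = 0
    · have hA : ∃ z, L = u ++ b :: z := pf_shape_trans hW ht
      have hB : ∃ z, L.drop i ++ L.take i = u ++ a :: z :=
        ⟨L.take i, by
          rw [hdropL, hj0, List.drop_zero, List.append_assoc, List.singleton_append]⟩
      exact pf_lt_of_shape hba hA hB
    · have hjpos : 0 < j := Nat.pos_of_ne_zero hj0
      have hjt : j < t.length := by omega
      obtain ⟨p, s', t', x, y, hxy, hpt, hpd⟩ := pf_lyndon_diff_drop hL hjpos hjt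
      have hdj : t.drop j = u.drop j ++ b :: v' := by
        rw [ht]; exact List.drop_append_of_le_length hju
      have hrot : L.drop i ++ L.take i = u.drop j ++ a :: L.take i := by
        rw [hdropL, List.append_assoc, List.singleton_append]
      rcases lt_trichotomy p.length (u.drop j).length with hlen | hlen | hlen
      · have h5 : p ++ [y] <+: u.drop j ++ b :: v' := ⟨t', by rw [← hdj, hpd]; simp⟩
        have h6 : p ++ [y] <+: u.drop j :=
          List.prefix_of_prefix_length_le h5 (List.prefix_append _ _)
            (by simp only [List.length_append, List.length_cons, List.length_nil]; omega)
        obtain ⟨z, hz⟩ := h6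
        have hA : ∃ z, L = p ++ x :: z := pf_shape_trans hW hpt
        have hB : ∃ zz, L.drop i ++ L.take i = p ++ y :: zz :=
          ⟨z ++ a :: L.take i, by rw [hrot, ← hz]; simp [List.append_assoc]⟩
        exact pf_lt_of_shape hxy hA hB
      · have hps : p = u.drop j := by
          have h5 : p <+: u.drop j ++ b :: v' := ⟨y :: t', by rw [← hdj, hpd]⟩
          exact (List.prefix_of_prefix_length_le h5 (List.prefix_append _ _)
            (le_of_eq hlen)).eq_of_length hlen
        have hyb : y = b := by
          have h7 := hpd.symm.trans hdj
          rw [hps] at h7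
          exact (List.cons.inj (List.append_cancel_left h7)).1
        have hA : ∃ z, L = u.drop j ++ x :: z :=
          pf_shape_trans hW (by rw [hpt, hps])
        have hB : ∃ z, L.drop i ++ L.take i = u.drop j ++ a :: z := ⟨L.take i, hrot⟩
        exact pf_lt_of_shape (lt_trans (hyb ▸ hxy) hba) hA hB
      · have h5 : u.drop j ++ [b] <+: p := by
          have ha : u.drop j ++ [b] <+: t.drop j := ⟨v', by rw [hdj]; simp⟩
          have hb : p <+: t.drop j := ⟨y :: t', hpd.symm⟩
          exact List.prefix_of_prefix_length_le ha hb
            (by simp only [List.length_append, List.length_cons, List.length_nil]; omega)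
        obtain ⟨p2, hp2⟩ := h5
        have hA : ∃ z, L = u.drop j ++ b :: z :=
          pf_shape_trans hW (show t = u.drop j ++ b :: (p2 ++ x :: s') by
            rw [hpt, ← hp2]; simp [List.append_assoc])
        have hB : ∃ z, L.drop i ++ L.take i = u.drop j ++ a :: z := ⟨L.take i, hrot⟩
        exact pf_lt_of_shape hba hA hB
  · -- rotation point inside the power part
    push_neg at hcase
    obtain ⟨q, r, hqr, hrlt, hqk⟩ :
        ∃ q r, i = q * t.length + r ∧ r < t.length ∧ q < k + 1 := by
      refine ⟨i / t.length, i % t.length, ?_, Nat.mod_lt _ hnpos, ?_⟩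
      · rw [Nat.mul_comm]; exact (Nat.div_add_mod i t.length).symm
      · by_contra hcon
        push_neg at hcon
        have h1 : (k + 1) * t.length ≤ (i / t.length) * t.length :=
          Nat.mul_le_mul_right _ hcon
        have h2 : (i / t.length) * t.length ≤ i := Nat.div_mul_le_self i t.length
        omega
    have hsplit : L = listPow t q ++ (t ++ (listPow t (k - q) ++ (u ++ [a]))) := by
      rw [hLdef, show k + 1 = q + (1 + (k - q)) from by omega, pf_listPow_add,
        pf_listPow_add, pf_listPow_one]
      simp [List.append_assoc]
    have hdropL : L.drop i = t.drop r ++ (listPow t (k - q) ++ (u ++ [a])) := by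
      have h2 : i = (listPow t q).length + r := by rw [pf_listPow_length]; omega
      rw [hsplit, h2, List.drop_length_add_append, List.drop_append_of_le_length (le_of_lt hrlt)]
    by_cases hr0 : r = 0
    · have hqpos : 0 < q := by
        rcases Nat.eq_zero_or_pos q with h | h
        · exfalso; rw [h, hr0] at hqr; simp at hqr; omega
        · exact h
      have hA : ∃ z, L = (listPow t (k + 1 - q) ++ u) ++ b :: z := by
        refine ⟨v' ++ (listPow t (q - 1) ++ (u ++ [a])), ?_⟩
        have hsp : listPow t (k + 1) = listPow t (k + 1 - q) ++ (t ++ listPow t (q - 1)) := by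
          conv_lhs => rw [show k + 1 = (k + 1 - q) + (1 + (q - 1)) from by omega]
          rw [pf_listPow_add, pf_listPow_add, pf_listPow_one]
        rw [hLdef, hsp, ht]
        simp [List.append_assoc]
      have hB : ∃ z, L.drop i ++ L.take i = (listPow t (k + 1 - q) ++ u) ++ a :: z := by
        refine ⟨L.take i, ?_⟩
        rw [hdropL, hr0, List.drop_zero, ← List.append_assoc, ← pf_listPow_succ,
          show (k - q) + 1 = k + 1 - q from by omega]
        simp [List.append_assoc]
      exact pf_lt_of_shape hba hA hB
    · obtain ⟨p, s', t', x, y, hxy, hpt, hpd⟩ :=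
        pf_lyndon_diff_drop hL (Nat.pos_of_ne_zero hr0) hrlt
      have hA : ∃ z, L = p ++ x :: z := pf_shape_trans hW hpt
      have hB : ∃ z, L.drop i ++ L.take i = p ++ y :: z := by
        refine ⟨t' ++ ((listPow t (k - q) ++ (u ++ [a])) ++ L.take i), ?_⟩
        rw [hdropL, hpd]; simp [List.append_assoc]
      exact pf_lt_of_shape hxy hA hB

end P'Helpers3
section P'Helpers4
set_option linter.unusedSectionVars false
variable [LinearOrder α]

theorem pf_lyndon_singleton (c : α) : IsLyndon [c] :=
  ⟨by simp, by intro i h1 h2; simp at h2; omega⟩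

theorem pf_replicate_not_lyndon {c : α} {m : ℕ} (hm : 2 ≤ m) :
    ¬ IsLyndon (List.replicate m c) := by
  intro h
  have h2 := h.2 1 one_pos (by simp; omega)
  have h3 : rot (List.replicate m c) 1 = List.replicate m c := by
    rw [rot, List.drop_replicate, List.take_replicate, ← List.replicate_add]
    congr 1
    omega
  rw [h3] at h2
  exact pf_irrefl h2

theorem pf_lyndon_min_head {h0 : α} {r : List α} (hL : IsLyndon (h0 :: r)) :
    ∀ y ∈ h0 :: r, h0 ≤ y := by
  intro y hy
  obtain ⟨s1, s2, hsplit⟩ := List.append_of_mem hy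
  rcases s1 with _ | ⟨c, s1'⟩
  · simp at hsplit
    exact le_of_eq hsplit.1
  · have hlen : (c :: s1').length < (h0 :: r).length := by
      have := congrArg List.length hsplit
      simp at this ⊢
      omega
    have h2 := hL.2 (c :: s1').length (by simp) hlen
    rw [rot] at h2
    have hdrop : (h0 :: r).drop (c :: s1').length = y :: s2 := by
      rw [hsplit]; exact List.drop_left
    rw [hdrop] at h2
    exact List.head_le_of_lt h2

theorem pf_not_inP' {u v' : List α} {b aa : α} (hL : IsLyndon (u ++ b :: v')) (hab : aa < b)
    {k : ℕ} (hk : 1 ≤ k) : ¬ InP' (listPow (u ++ b :: v') k ++ u ++ [aa]) := by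
  obtain ⟨k, rfl⟩ : ∃ k', k = k' + 1 := ⟨k - 1, by omega⟩
  set t := u ++ b :: v' with ht
  rintro (⟨hne, s, hLyn⟩ | ⟨c, m, hm, hcmax, heq⟩)
  · set L := (listPow t (k + 1) ++ u ++ [aa]) ++ s with hLdef
    have hn : 0 < t.length := by simp [ht]
    have hi : 0 < (k + 1) * t.length := Nat.mul_pos (by omega) hn
    have hLlen : L.length = (k + 1) * t.length + u.length + 1 + s.length := by
      simp [hLdef, pf_listPow_length, Nat.add_assoc]; omega
    have h2 := hLyn.2 ((k + 1) * t.length) hi (by rw [hLlen]; omega)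
    rw [rot] at h2
    have hdrop : L.drop ((k + 1) * t.length) = u ++ aa :: s := by
      have h1 : L = listPow t (k + 1) ++ (u ++ aa :: s) := by
        rw [hLdef]; simp [List.append_assoc]
      rw [h1, List.drop_left' (pf_listPow_length t (k + 1))]
    rw [hdrop] at h2
    have hW : L = t ++ (listPow t k ++ ((u ++ [aa]) ++ s)) := by
      rw [hLdef, pf_listPow_succ]; simp [List.append_assoc]
    have h3 : (u ++ aa :: s) ++ L.take ((k + 1) * t.length) < L := by
      apply pf_lt_of_shape (q := u) hab
      · exact ⟨s ++ L.take ((k + 1) * t.length), by simp [List.append_assoc]⟩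
      · exact pf_shape_trans hW ht
    exact pf_asymm h2 h3
  · have hbmem : b ∈ listPow t (k + 1) ++ u ++ [aa] := by
      rw [pf_listPow_succ]
      simp [ht]
    have hamem : aa ∈ listPow t (k + 1) ++ u ++ [aa] := by simp
    rw [heq] at hbmem hamem
    have e1 := List.eq_of_mem_replicate hbmem
    have e2 := List.eq_of_mem_replicate hamem
    rw [e1, e2] at hab
    exact lt_irrefl c hab

end P'Helpers4
section P'Helpers5
set_option linter.unusedSectionVars false
variable [LinearOrder α]

theorem pf_backward {u v' : List α} {b : α} {k : ℕ} (hk : 1 ≤ k)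
    (hL : IsLyndon (u ++ b :: v')) : InP' (listPow (u ++ b :: v') k ++ u) := by
  have htlen : 0 < (u ++ b :: v').length := by simp
  have hwne : listPow (u ++ b :: v') k ++ u ≠ [] := by
    apply List.ne_nil_of_length_pos
    rw [List.length_append, pf_listPow_length]
    have := Nat.mul_pos hk htlen
    omega
  by_cases hmax : ∀ x : α, x ≤ b
  · by_cases hu0 : u = [] ∧ v' = []
    · obtain ⟨rfl, rfl⟩ := hu0
      rw [List.append_nil, List.nil_append, pf_listPow_singleton]
      rcases eq_or_lt_of_le hk with hk1 | hk2
      · left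
        refine ⟨by simp; omega, [], ?_⟩
        rw [← hk1, List.append_nil]
        simpa using pf_lyndon_singleton b
      · right
        exact ⟨b, k, by omega, hmax, rfl⟩
    · obtain ⟨h0, r, hhr⟩ : ∃ h0 r, u ++ b :: v' = h0 :: r := by
        cases u with
        | nil => exact ⟨b, v', rfl⟩
        | cons c u' => exact ⟨c, u' ++ b :: v', rfl⟩
      have hb_mem : b ∈ h0 :: r := by rw [← hhr]; simp
      have hminb : h0 ≤ b := pf_lyndon_min_head (hhr ▸ hL) b hb_mem
      have hlt : h0 < b := by
        rcases lt_or_eq_of_le hminb with h | h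
        · exact h
        · exfalso
          have hall : ∀ y ∈ h0 :: r, y = b := fun y hy =>
            le_antisymm (hmax y) (h ▸ pf_lyndon_min_head (hhr ▸ hL) y hy)
          have hrep : h0 :: r = List.replicate (h0 :: r).length b :=
            List.eq_replicate_of_mem hall
          have hlen2 : 2 ≤ (h0 :: r).length := by
            by_contra hcon
            push_neg at hcon
            have hl := congrArg List.length hhr
            simp only [List.length_append, List.length_cons, List.length_nil] at hl hcon
            apply hu0
            constructor
            · exact List.eq_nil_of_length_eq_zero (by omega)
            · exact List.eq_nil_of_length_eq_zero (by omega)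
          exact pf_replicate_not_lyndon hlen2 (hrep ▸ hhr ▸ hL)
      have hext : IsLyndon (listPow ([] ++ h0 :: r) (k + 1) ++ [] ++ [b]) :=
        pf_duval_ext (u := []) (by rw [List.nil_append, ← hhr]; exact hL) hlt (by omega)
      have hext' : IsLyndon (listPow (u ++ b :: v') (k + 1) ++ [b]) := by
        rw [hhr]
        simpa using hext
      have hpre : listPow (u ++ b :: v') k ++ u <+: listPow (u ++ b :: v') (k + 1) ++ [b] := by
        refine ⟨(b :: v') ++ [b], ?_⟩
        rw [pf_listPow_succ']
        simp [List.append_assoc]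
      obtain ⟨z, hz⟩ := hpre
      exact Or.inl ⟨hwne, z, by rw [hz]; exact hext'⟩
  · push_neg at hmax
    obtain ⟨aa, haa⟩ := hmax
    left
    exact ⟨hwne, [aa], pf_duval_ext hL haa hk⟩

theorem pf_forward (w : List α) (h : InP' w) :
    ∃ (u v : List α) (k : ℕ), v ≠ [] ∧ 1 ≤ k ∧ IsLyndon (u ++ v) ∧
      w = listPow (u ++ v) k ++ u := by
  induction w using List.reverseRecOn with
  | nil =>
    rcases h with ⟨hne, _⟩ | ⟨c, m, hm, _, heq⟩
    · exact absurd rfl hne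
    · exfalso
      have := congrArg List.length heq
      simp at this
      omega
  | append_singleton w a ih =>
    rcases eq_or_ne w [] with rfl | hwne
    · refine ⟨[], [a], 1, by simp, le_refl 1, ?_, by simp [pf_listPow_one]⟩
      simpa using pf_lyndon_singleton a
    · have hw : InP' w := by
        rcases h with ⟨hne, s, hLyn⟩ | ⟨c, m, hm, hcmax, heq⟩
        · exact Or.inl ⟨hwne, [a] ++ s, by rwa [← List.append_assoc]⟩
        · have hlenw : w.length = m - 1 := by
            have := congrArg List.length heq
            simp at this
            omega
          have heq2 : w ++ [a] = List.replicate (m - 1) c ++ [c] := by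
            rw [heq]
            conv_lhs => rw [show m = (m - 1) + 1 from by omega]
            rw [List.replicate_succ']
          obtain ⟨hw1, _⟩ := List.append_inj heq2 (by simp [hlenw])
          rcases eq_or_lt_of_le (show 1 ≤ m - 1 from by omega) with h1 | h2
          · left
            refine ⟨hwne, [], ?_⟩
            rw [List.append_nil, hw1, ← h1]
            simpa using pf_lyndon_singleton c
          · right
            exact ⟨c, m - 1, by omega, hcmax, hw1⟩
      obtain ⟨u, v, k, hv, hk, hL, hwdecomp⟩ := ih hw
      obtain ⟨b, v', rfl⟩ := List.exists_cons_of_ne_nil hv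
      rcases lt_trichotomy a b with hab | rfl | hba
      · exfalso
        apply pf_not_inP' hL hab hk
        rw [hwdecomp] at h
        exact h
      · rcases eq_or_ne v' [] with rfl | hv'ne
        · refine ⟨[], u ++ [a], k + 1, by simp, by omega, by simpa using hL, ?_⟩
          rw [hwdecomp]
          simp [pf_listPow_succ', List.append_assoc]
        · refine ⟨u ++ [a], v', k, hv'ne, hk, by simpa [List.append_assoc] using hL, ?_⟩
          rw [hwdecomp]
          simp [List.append_assoc]
      · refine ⟨[], w ++ [a], 1, by simp, le_refl 1, ?_, by simp [pf_listPow_one]⟩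
        rw [List.nil_append, hwdecomp]
        exact pf_duval_ext hL hba hk

end P'Helpers5
/-- `P' = { (uv)^k u : u ∈ Σ*, v ∈ Σ⁺, k ≥ 1 and uv ∈ L }`. -/
theorem mem_P'_iff [LinearOrder α] (w : List α) :
    InP' w ↔ ∃ (u v : List α) (k : ℕ), v ≠ [] ∧ 1 ≤ k ∧ IsLyndon (u ++ v) ∧
      w = listPow (u ++ v) k ++ u := by
  constructor
  · exact pf_forward w
  · rintro ⟨u, v, k, hv, hk, hL, rfl⟩
    obtain ⟨b, v', rfl⟩ := List.exists_cons_of_ne_nil hv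
    exact pf_backward hk hL
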